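/- Let μ_t = Σ_{i=0}^{n} μ_i t^i be an equivariant formal one-parameter deformation of order n of a G-Hom Lts (T,[·,·,·],α). Then the (n+1)-th obstruction cochain Ob_{n+1}(T) = F_{n+1} is a 5-cocycle in the equivariant complex C⁵_{G(α)}(T): δ⁵F_{n+1} = 0. -/

import Mathlib

open Finset

theorem stmt11_R {M : Type*} [AddCommMonoid M] (k : ℕ) (A : ℕ → ℕ → ℕ → M) :
    ∑ p ∈ antidiagonal k, ∑ q ∈ antidiagonal p.2, A p.1 q.1 q.2 =
    ∑ p ∈ antidiagonal k, ∑ q ∈ antidiagonal p.2, A q.1 p.1 q.2 := by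
  rw [Finset.sum_sigma', Finset.sum_sigma']
  refine Finset.sum_nbij' (fun x => ⟨(x.2.1, x.1.1 + x.2.2), (x.1.1, x.2.2)⟩)
    (fun x => ⟨(x.2.1, x.1.1 + x.2.2), (x.1.1, x.2.2)⟩) ?_ ?_ ?_ ?_ ?_
  · rintro ⟨⟨i, j⟩, ⟨l, t⟩⟩ hx
    simp only [mem_sigma, Finset.HasAntidiagonal.mem_antidiagonal, and_true] at hx ⊢
    omega
  · rintro ⟨⟨i, j⟩, ⟨l, t⟩⟩ hx
    simp only [mem_sigma, Finset.HasAntidiagonal.mem_antidiagonal, and_true] at hx ⊢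
    omega
  · rintro ⟨⟨i, j⟩, ⟨l, t⟩⟩ hx
    simp only [mem_sigma, Finset.HasAntidiagonal.mem_antidiagonal] at hx
    simp [hx.2]
  · rintro ⟨⟨i, j⟩, ⟨l, t⟩⟩ hx
    simp only [mem_sigma, Finset.HasAntidiagonal.mem_antidiagonal] at hx
    simp [hx.2]
  · rintro ⟨⟨i, j⟩, ⟨l, t⟩⟩ hx
    rfl

theorem stmt11_R2 {M : Type*} [AddCommMonoid M] (k : ℕ) (A : ℕ → ℕ → ℕ → M) :
    ∑ p ∈ antidiagonal k, ∑ q ∈ antidiagonal p.2, A p.1 q.1 q.2 =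
    ∑ p ∈ antidiagonal k, ∑ q ∈ antidiagonal p.2, A q.1 q.2 p.1 := by
  rw [Finset.sum_sigma', Finset.sum_sigma']
  refine Finset.sum_nbij' (fun x => ⟨(x.2.2, x.1.1 + x.2.1), (x.1.1, x.2.1)⟩)
    (fun x => ⟨(x.2.1, x.2.2 + x.1.1), (x.2.2, x.1.1)⟩) ?_ ?_ ?_ ?_ ?_
  · rintro ⟨⟨i, j⟩, ⟨s, l⟩⟩ hx
    simp only [mem_sigma, Finset.HasAntidiagonal.mem_antidiagonal, and_true] at hx ⊢
    omega
  · rintro ⟨⟨l, r⟩, ⟨i, s⟩⟩ hx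
    simp only [mem_sigma, Finset.HasAntidiagonal.mem_antidiagonal, and_true] at hx ⊢
    omega
  · rintro ⟨⟨i, j⟩, ⟨s, l⟩⟩ hx
    simp only [mem_sigma, Finset.HasAntidiagonal.mem_antidiagonal] at hx
    simp [hx.2]
  · rintro ⟨⟨l, r⟩, ⟨i, s⟩⟩ hx
    simp only [mem_sigma, Finset.HasAntidiagonal.mem_antidiagonal] at hx
    simp [hx.2]
  · rintro ⟨⟨i, j⟩, ⟨s, l⟩⟩ hx
    rfl

section
variable {K : Type*} [Field K] {T : Type*} [AddCommGroup T] [Module K T]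

/-- convolution of a family of trilinear maps -/
def stmt11_conv (m : ℕ → T →ₗ[K] T →ₗ[K] T →ₗ[K] T) (f g h : ℕ → T) : ℕ → T :=
  fun k => ∑ p ∈ antidiagonal k, ∑ q ∈ antidiagonal p.2, ∑ s ∈ antidiagonal q.2,
    m p.1 (f q.1) (g s.1) (h s.2)

def stmt11_ee (x : T) : ℕ → T := fun k => if k = 0 then x else 0

def stmt11_ph (al : T →ₗ[K] T) (f : ℕ → T) : ℕ → T := fun k => al (f k)

variable (m : ℕ → T →ₗ[K] T →ₗ[K] T →ₗ[K] T) (al : T →ₗ[K] T)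

theorem stmt11_sum_ad_left {M : Type*} [AddCommMonoid M] (n : ℕ) (B : ℕ × ℕ → M)
    (h : ∀ p ∈ antidiagonal n, p.1 ≠ 0 → B p = 0) :
    ∑ p ∈ antidiagonal n, B p = B (0, n) := by
  refine Finset.sum_eq_single_of_mem (0, n) (by simp) fun p hp hne => ?_
  refine h p hp fun h1 => hne ?_
  have h2 := mem_antidiagonal.1 hp
  have : p.2 = n := by omega
  rw [Prod.ext_iff]; exact ⟨h1, this⟩

theorem stmt11_sum_ad_right {M : Type*} [AddCommMonoid M] (n : ℕ) (B : ℕ × ℕ → M)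
    (h : ∀ p ∈ antidiagonal n, p.2 ≠ 0 → B p = 0) :
    ∑ p ∈ antidiagonal n, B p = B (n, 0) := by
  refine Finset.sum_eq_single_of_mem (n, 0) (by simp) fun p hp hne => ?_
  refine h p hp fun h1 => hne ?_
  have h2 := mem_antidiagonal.1 hp
  have : p.1 = n := by omega
  rw [Prod.ext_iff]; exact ⟨this, h1⟩

theorem stmt11_conv_sub1 (f f' g h : ℕ → T) :
    stmt11_conv m (f - f') g h = stmt11_conv m f g h - stmt11_conv m f' g h := by
  funext k
  simp [stmt11_conv, map_sub, LinearMap.sub_apply, Finset.sum_sub_distrib]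

theorem stmt11_conv_sub3 (f g h h' : ℕ → T) :
    stmt11_conv m f g (h - h') = stmt11_conv m f g h - stmt11_conv m f g h' := by
  funext k
  simp [stmt11_conv, map_sub, LinearMap.sub_apply, Finset.sum_sub_distrib]

theorem stmt11_conv_swap (hsw : ∀ i (a b c : T), m i b a c = - m i a b c)
    (f g h : ℕ → T) : stmt11_conv m g f h = - stmt11_conv m f g h := by
  funext k
  show (∑ p ∈ antidiagonal k, ∑ q ∈ antidiagonal p.2, ∑ s ∈ antidiagonal q.2,
      m p.1 (g q.1) (f s.1) (h s.2)) = _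
  have : ∀ p : ℕ × ℕ,
      (∑ q ∈ antidiagonal p.2, ∑ s ∈ antidiagonal q.2, m p.1 (g q.1) (f s.1) (h s.2)) =
      - ∑ q ∈ antidiagonal p.2, ∑ s ∈ antidiagonal q.2, m p.1 (f q.1) (g s.1) (h s.2) := by
    intro p
    rw [stmt11_R p.2 (fun a b c => m p.1 (g a) (f b) (h c))]
    rw [← Finset.sum_neg_distrib]
    refine Finset.sum_congr rfl fun q _ => ?_
    rw [← Finset.sum_neg_distrib]
    exact Finset.sum_congr rfl fun s _ => hsw _ _ _ _
  simp only [this, Finset.sum_neg_distrib, Pi.neg_apply]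
  rfl

theorem stmt11_conv_mult (h0 : ∀ i (a b c : T), m i (al a) (al b) (al c) = al (m i a b c))
    (f g h : ℕ → T) :
    stmt11_conv m (stmt11_ph al f) (stmt11_ph al g) (stmt11_ph al h) =
      stmt11_ph al (stmt11_conv m f g h) := by
  funext k
  simp [stmt11_conv, stmt11_ph, h0, map_sum]

theorem stmt11_phee (x : T) : stmt11_ph al (stmt11_ee x) = stmt11_ee (al x) := by
  funext k
  simp only [stmt11_ph, stmt11_ee, apply_ite al, map_zero]

theorem stmt11_Cw3 (a b : T) (w : ℕ → T) (k : ℕ) :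
    stmt11_conv m (stmt11_ee a) (stmt11_ee b) w k =
      ∑ p ∈ antidiagonal k, m p.1 a b (w p.2) := by
  unfold stmt11_conv
  refine Finset.sum_congr rfl fun p _ => ?_
  have inner : ∀ q : ℕ × ℕ,
      (∑ s ∈ antidiagonal q.2, m p.1 (stmt11_ee a q.1) (stmt11_ee b s.1) (w s.2)) =
      m p.1 (stmt11_ee a q.1) b (w q.2) := by
    intro q
    rw [stmt11_sum_ad_left q.2 _ (fun s _ hs => by simp [stmt11_ee, hs])]
    simp [stmt11_ee]
  simp only [inner]
  rw [stmt11_sum_ad_left p.2 _ (fun q _ hq => by simp [stmt11_ee, hq])]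
  simp [stmt11_ee]

theorem stmt11_Cw1 (b c : T) (w : ℕ → T) (k : ℕ) :
    stmt11_conv m w (stmt11_ee b) (stmt11_ee c) k =
      ∑ p ∈ antidiagonal k, m p.1 (w p.2) b c := by
  unfold stmt11_conv
  refine Finset.sum_congr rfl fun p _ => ?_
  rw [stmt11_sum_ad_right p.2 _ (fun q hq hq2 => ?_)]
  · rw [Nat.antidiagonal_zero, Finset.sum_singleton]
    simp [stmt11_ee]
  · refine Finset.sum_eq_zero fun s hs => ?_
    have := mem_antidiagonal.1 hs
    rcases Nat.eq_zero_or_pos s.1 with h1 | h1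
    · have : s.2 ≠ 0 := by omega
      simp [stmt11_ee, this]
    · have : s.1 ≠ 0 := by omega
      simp [stmt11_ee, this]

theorem stmt11_Cw2 (a c : T) (w : ℕ → T) (k : ℕ) :
    stmt11_conv m (stmt11_ee a) w (stmt11_ee c) k =
      ∑ p ∈ antidiagonal k, m p.1 a (w p.2) c := by
  unfold stmt11_conv
  refine Finset.sum_congr rfl fun p _ => ?_
  rw [stmt11_sum_ad_left p.2 _ (fun q _ hq => by simp [stmt11_ee, hq])]
  rw [stmt11_sum_ad_right p.2 _ (fun s _ hs => by simp [stmt11_ee, hs])]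
  simp [stmt11_ee]

theorem stmt11_E1 (a b c : T) :
    stmt11_conv m (stmt11_ee a) (stmt11_ee b) (stmt11_ee c) = fun k => m k a b c := by
  funext k
  rw [stmt11_Cw3]
  rw [stmt11_sum_ad_right k _ (fun p _ hp => by simp [stmt11_ee, hp])]
  simp [stmt11_ee]

theorem stmt11_Dw13 (b : T) (w v : ℕ → T) (k : ℕ) :
    stmt11_conv m w (stmt11_ee b) v k =
      ∑ p ∈ antidiagonal k, ∑ q ∈ antidiagonal p.2, m p.1 (w q.1) b (v q.2) := by
  unfold stmt11_conv
  refine Finset.sum_congr rfl fun p _ => Finset.sum_congr rfl fun q _ => ?_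
  rw [stmt11_sum_ad_left q.2 _ (fun s _ hs => by simp [stmt11_ee, hs])]
  simp [stmt11_ee]

theorem stmt11_Dw12 (c : T) (w v : ℕ → T) (k : ℕ) :
    stmt11_conv m w v (stmt11_ee c) k =
      ∑ p ∈ antidiagonal k, ∑ q ∈ antidiagonal p.2, m p.1 (w q.1) (v q.2) c := by
  unfold stmt11_conv
  refine Finset.sum_congr rfl fun p _ => Finset.sum_congr rfl fun q _ => ?_
  rw [stmt11_sum_ad_right q.2 _ (fun s _ hs => by simp [stmt11_ee, hs])]
  simp [stmt11_ee]

theorem stmt11_Dw23 (a : T) (w v : ℕ → T) (k : ℕ) :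
    stmt11_conv m (stmt11_ee a) w v k =
      ∑ p ∈ antidiagonal k, ∑ s ∈ antidiagonal p.2, m p.1 a (w s.1) (v s.2) := by
  unfold stmt11_conv
  refine Finset.sum_congr rfl fun p _ => ?_
  rw [stmt11_sum_ad_left p.2 _ (fun q _ hq => ?_)]
  · simp [stmt11_ee]
  · refine Finset.sum_eq_zero fun s hs => by simp [stmt11_ee, hq]

end
section
variable {K : Type*} [Field K] {T : Type*} [AddCommGroup T] [Module K T]
variable (m : ℕ → T →ₗ[K] T →ₗ[K] T →ₗ[K] T) (al : T →ₗ[K] T)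

def stmt11_FW (a b c d e : ℕ → T) : ℕ → T :=
  stmt11_conv m (stmt11_ph al a) (stmt11_ph al b) (stmt11_conv m c d e) -
  stmt11_conv m (stmt11_conv m a b c) (stmt11_ph al d) (stmt11_ph al e) -
  stmt11_conv m (stmt11_ph al c) (stmt11_conv m a b d) (stmt11_ph al e) -
  stmt11_conv m (stmt11_ph al c) (stmt11_ph al d) (stmt11_conv m a b e)

def stmt11_J (r : ℕ) (a b c d e : T) : T :=
  ∑ q ∈ antidiagonal r,
    (m q.1 (al a) (al b) (m q.2 c d e) - m q.1 (m q.2 a b c) (al d) (al e) -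
     m q.1 (al c) (m q.2 a b d) (al e) - m q.1 (al c) (al d) (m q.2 a b e))

theorem stmt11_FJ (x₁ x₂ x₃ x₄ x₅ : T) :
    stmt11_FW m al (stmt11_ee x₁) (stmt11_ee x₂) (stmt11_ee x₃) (stmt11_ee x₄) (stmt11_ee x₅)
      = fun r => stmt11_J m al r x₁ x₂ x₃ x₄ x₅ := by
  funext r
  simp only [stmt11_FW, Pi.sub_apply, stmt11_phee, stmt11_E1]
  rw [stmt11_Cw3 m (al x₁) (al x₂) (fun k => m k x₃ x₄ x₅) r]
  rw [stmt11_Cw1 m (al x₄) (al x₅) (fun k => m k x₁ x₂ x₃) r]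
  rw [stmt11_Cw2 m (al x₃) (al x₅) (fun k => m k x₁ x₂ x₄) r]
  rw [stmt11_Cw3 m (al x₃) (al x₄) (fun k => m k x₁ x₂ x₅) r]
  simp only [stmt11_J, Finset.sum_sub_distrib]

theorem stmt11_slot1 (w : ℕ → T) (y₂ y₃ y₄ y₅ : T) (k : ℕ) :
    stmt11_FW m al w (stmt11_ee y₂) (stmt11_ee y₃) (stmt11_ee y₄) (stmt11_ee y₅) k =
      ∑ p ∈ antidiagonal k, stmt11_J m al p.2 (w p.1) y₂ y₃ y₄ y₅ := by
  simp only [stmt11_FW, Pi.sub_apply, stmt11_phee, stmt11_E1]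
  rw [stmt11_Dw13 m (al y₂) (stmt11_ph al w) (fun j => m j y₃ y₄ y₅) k]
  rw [stmt11_Cw1 m (al y₄) (al y₅) (stmt11_conv m w (stmt11_ee y₂) (stmt11_ee y₃)) k]
  rw [stmt11_Cw2 m (al y₃) (al y₅) (stmt11_conv m w (stmt11_ee y₂) (stmt11_ee y₄)) k]
  rw [stmt11_Cw3 m (al y₃) (al y₄) (stmt11_conv m w (stmt11_ee y₂) (stmt11_ee y₅)) k]
  simp only [stmt11_Cw1 m y₂ y₃ w, stmt11_Cw1 m y₂ y₄ w, stmt11_Cw1 m y₂ y₅ w, stmt11_ph]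
  simp only [map_sum, LinearMap.sum_apply]
  rw [stmt11_R k (fun i l t => m i (al (w l)) (al y₂) (m t y₃ y₄ y₅))]
  rw [stmt11_R2 k (fun i s l => m i (m s (w l) y₂ y₃) (al y₄) (al y₅))]
  rw [stmt11_R2 k (fun i s l => m i (al y₃) (m s (w l) y₂ y₄) (al y₅))]
  rw [stmt11_R2 k (fun i s l => m i (al y₃) (al y₄) (m s (w l) y₂ y₅))]
  simp only [stmt11_J, Finset.sum_sub_distrib]

end
section
variable {K : Type*} [Field K] {T : Type*} [AddCommGroup T] [Module K T]
variable (m : ℕ → T →ₗ[K] T →ₗ[K] T →ₗ[K] T) (al : T →ₗ[K] T)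

theorem stmt11_slot2 (w : ℕ → T) (y₁ y₃ y₄ y₅ : T) (k : ℕ) :
    stmt11_FW m al (stmt11_ee y₁) w (stmt11_ee y₃) (stmt11_ee y₄) (stmt11_ee y₅) k =
      ∑ p ∈ antidiagonal k, stmt11_J m al p.2 y₁ (w p.1) y₃ y₄ y₅ := by
  simp only [stmt11_FW, Pi.sub_apply, stmt11_phee, stmt11_E1]
  rw [stmt11_Dw23 m (al y₁) (stmt11_ph al w) (fun j => m j y₃ y₄ y₅) k]
  rw [stmt11_Cw1 m (al y₄) (al y₅) (stmt11_conv m (stmt11_ee y₁) w (stmt11_ee y₃)) k]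
  rw [stmt11_Cw2 m (al y₃) (al y₅) (stmt11_conv m (stmt11_ee y₁) w (stmt11_ee y₄)) k]
  rw [stmt11_Cw3 m (al y₃) (al y₄) (stmt11_conv m (stmt11_ee y₁) w (stmt11_ee y₅)) k]
  simp only [stmt11_Cw2 m y₁ y₃ w, stmt11_Cw2 m y₁ y₄ w, stmt11_Cw2 m y₁ y₅ w, stmt11_ph]
  simp only [map_sum, LinearMap.sum_apply]
  rw [stmt11_R k (fun i l t => m i (al y₁) (al (w l)) (m t y₃ y₄ y₅))]
  rw [stmt11_R2 k (fun i s l => m i (m s y₁ (w l) y₃) (al y₄) (al y₅))]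
  rw [stmt11_R2 k (fun i s l => m i (al y₃) (m s y₁ (w l) y₄) (al y₅))]
  rw [stmt11_R2 k (fun i s l => m i (al y₃) (al y₄) (m s y₁ (w l) y₅))]
  simp only [stmt11_J, Finset.sum_sub_distrib]

theorem stmt11_slot3 (w : ℕ → T) (y₁ y₂ y₄ y₅ : T) (k : ℕ) :
    stmt11_FW m al (stmt11_ee y₁) (stmt11_ee y₂) w (stmt11_ee y₄) (stmt11_ee y₅) k =
      ∑ p ∈ antidiagonal k, stmt11_J m al p.2 y₁ y₂ (w p.1) y₄ y₅ := by
  simp only [stmt11_FW, Pi.sub_apply, stmt11_phee, stmt11_E1]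
  rw [stmt11_Cw3 m (al y₁) (al y₂) (stmt11_conv m w (stmt11_ee y₄) (stmt11_ee y₅)) k]
  rw [stmt11_Cw1 m (al y₄) (al y₅) (stmt11_conv m (stmt11_ee y₁) (stmt11_ee y₂) w) k]
  rw [stmt11_Dw12 m (al y₅) (stmt11_ph al w) (fun j => m j y₁ y₂ y₄) k]
  rw [stmt11_Dw13 m (al y₄) (stmt11_ph al w) (fun j => m j y₁ y₂ y₅) k]
  simp only [stmt11_Cw1 m y₄ y₅ w, stmt11_Cw3 m y₁ y₂ w, stmt11_ph]
  simp only [map_sum, LinearMap.sum_apply]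
  rw [stmt11_R2 k (fun i s l => m i (al y₁) (al y₂) (m s (w l) y₄ y₅))]
  rw [stmt11_R2 k (fun i s l => m i (m s y₁ y₂ (w l)) (al y₄) (al y₅))]
  rw [stmt11_R k (fun i l t => m i (al (w l)) (m t y₁ y₂ y₄) (al y₅))]
  rw [stmt11_R k (fun i l t => m i (al (w l)) (al y₄) (m t y₁ y₂ y₅))]
  simp only [stmt11_J, Finset.sum_sub_distrib]

theorem stmt11_slot4 (w : ℕ → T) (y₁ y₂ y₃ y₅ : T) (k : ℕ) :
    stmt11_FW m al (stmt11_ee y₁) (stmt11_ee y₂) (stmt11_ee y₃) w (stmt11_ee y₅) k =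
      ∑ p ∈ antidiagonal k, stmt11_J m al p.2 y₁ y₂ y₃ (w p.1) y₅ := by
  simp only [stmt11_FW, Pi.sub_apply, stmt11_phee, stmt11_E1]
  rw [stmt11_Cw3 m (al y₁) (al y₂) (stmt11_conv m (stmt11_ee y₃) w (stmt11_ee y₅)) k]
  rw [stmt11_Dw12 m (al y₅) (fun j => m j y₁ y₂ y₃) (stmt11_ph al w) k]
  rw [stmt11_Cw2 m (al y₃) (al y₅) (stmt11_conv m (stmt11_ee y₁) (stmt11_ee y₂) w) k]
  rw [stmt11_Dw23 m (al y₃) (stmt11_ph al w) (fun j => m j y₁ y₂ y₅) k]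
  simp only [stmt11_Cw2 m y₃ y₅ w, stmt11_Cw3 m y₁ y₂ w, stmt11_ph]
  simp only [map_sum, LinearMap.sum_apply]
  rw [stmt11_R2 k (fun i s l => m i (al y₁) (al y₂) (m s y₃ (w l) y₅))]
  rw [stmt11_R2 k (fun i t l => m i (m t y₁ y₂ y₃) (al (w l)) (al y₅))]
  rw [stmt11_R2 k (fun i s l => m i (al y₃) (m s y₁ y₂ (w l)) (al y₅))]
  rw [stmt11_R k (fun i l t => m i (al y₃) (al (w l)) (m t y₁ y₂ y₅))]
  simp only [stmt11_J, Finset.sum_sub_distrib]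

theorem stmt11_slot5 (w : ℕ → T) (y₁ y₂ y₃ y₄ : T) (k : ℕ) :
    stmt11_FW m al (stmt11_ee y₁) (stmt11_ee y₂) (stmt11_ee y₃) (stmt11_ee y₄) w k =
      ∑ p ∈ antidiagonal k, stmt11_J m al p.2 y₁ y₂ y₃ y₄ (w p.1) := by
  simp only [stmt11_FW, Pi.sub_apply, stmt11_phee, stmt11_E1]
  rw [stmt11_Cw3 m (al y₁) (al y₂) (stmt11_conv m (stmt11_ee y₃) (stmt11_ee y₄) w) k]
  rw [stmt11_Dw13 m (al y₄) (fun j => m j y₁ y₂ y₃) (stmt11_ph al w) k]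
  rw [stmt11_Dw23 m (al y₃) (fun j => m j y₁ y₂ y₄) (stmt11_ph al w) k]
  rw [stmt11_Cw3 m (al y₃) (al y₄) (stmt11_conv m (stmt11_ee y₁) (stmt11_ee y₂) w) k]
  simp only [stmt11_Cw3 m y₃ y₄ w, stmt11_Cw3 m y₁ y₂ w, stmt11_ph]
  simp only [map_sum, LinearMap.sum_apply]
  rw [stmt11_R2 k (fun i s l => m i (al y₁) (al y₂) (m s y₃ y₄ (w l)))]
  rw [stmt11_R2 k (fun i t l => m i (m t y₁ y₂ y₃) (al y₄) (al (w l)))]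
  rw [stmt11_R2 k (fun i t l => m i (al y₃) (m t y₁ y₂ y₄) (al (w l)))]
  rw [stmt11_R2 k (fun i s l => m i (al y₃) (al y₄) (m s y₁ y₂ (w l)))]
  simp only [stmt11_J, Finset.sum_sub_distrib]

end

theorem stmt11_UL {M : Type*} [AddCommGroup M] (ν : M → M → M → M) (φ : M → M)
    (hsub1 : ∀ a b c d : M, ν (a - b) c d = ν a c d - ν b c d)
    (hsub3 : ∀ a b c d : M, ν a b (c - d) = ν a b c - ν a b d)
    (hswap : ∀ a b c : M, ν b a c = - ν a b c)
    (hmult : ∀ a b c : M, ν (φ a) (φ b) (φ c) = φ (ν a b c))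
    (FU : M → M → M → M → M → M)
    (hFU : ∀ a b c d e, FU a b c d e =
      ν (φ a) (φ b) (ν c d e) - ν (ν a b c) (φ d) (φ e) -
      ν (φ c) (ν a b d) (φ e) - ν (φ c) (φ d) (ν a b e))
    (x₁ x₂ x₃ x₄ x₅ x₆ x₇ : M) :
    ν (FU x₁ x₂ x₃ x₄ x₅) (φ (φ x₆)) (φ (φ x₇)) -
      ν (FU x₁ x₂ x₃ x₄ x₆) (φ (φ x₅)) (φ (φ x₇)) +
      ν (φ (φ x₁)) (φ (φ x₂)) (FU x₃ x₄ x₅ x₆ x₇) -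
      ν (φ (φ x₃)) (φ (φ x₄)) (FU x₁ x₂ x₅ x₆ x₇) +
      ν (φ (φ x₅)) (φ (φ x₆)) (FU x₁ x₂ x₃ x₄ x₇) -
      FU (ν x₁ x₂ x₃) (φ x₄) (φ x₅) (φ x₆) (φ x₇) -
      FU (φ x₃) (ν x₁ x₂ x₄) (φ x₅) (φ x₆) (φ x₇) -
      FU (φ x₃) (φ x₄) (ν x₁ x₂ x₅) (φ x₆) (φ x₇) -
      FU (φ x₃) (φ x₄) (φ x₅) (ν x₁ x₂ x₆) (φ x₇) -
      FU (φ x₃) (φ x₄) (φ x₅) (φ x₆) (ν x₁ x₂ x₇) +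
      FU (φ x₁) (φ x₂) (ν x₃ x₄ x₅) (φ x₆) (φ x₇) +
      FU (φ x₁) (φ x₂) (φ x₅) (ν x₃ x₄ x₆) (φ x₇) +
      FU (φ x₁) (φ x₂) (φ x₅) (φ x₆) (ν x₃ x₄ x₇) -
      FU (φ x₁) (φ x₂) (φ x₃) (φ x₄) (ν x₅ x₆ x₇) = 0 := by
  simp only [hFU, hsub1, hsub3, hmult]
  rw [hswap (ν (φ x₁) (φ x₂) (ν x₃ x₄ x₆)) (φ (φ x₅)) (φ (φ x₇)),
      hswap (ν (φ x₃) (φ x₄) (ν x₁ x₂ x₆)) (φ (φ x₅)) (φ (φ x₇)),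
      hswap (ν (φ x₃) (ν x₁ x₂ x₄) (φ x₆)) (φ (φ x₅)) (φ (φ x₇)),
      hswap (ν (ν x₁ x₂ x₃) (φ x₄) (φ x₆)) (φ (φ x₅)) (φ (φ x₇))]
  abel


/-- Let `μ_t = Σ_{i=0}^n μ_i t^i` be an equivariant formal
one-parameter deformation of order `n` of a `G`-Hom Lie triple system `(T, brT, α)`.
Then the `(n+1)`-th obstruction cochain `Ob_{n+1}(T) = F_{n+1}` is a 5-cocycle in the
equivariant complex `C⁵_{G(α)}(T)`: `δ⁵ F_{n+1} = 0` (the coboundary of the complex with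
coefficients in the adjoint representation, written out explicitly below). -/
theorem stmt11 {K : Type*} [Field K] {T G : Type*}
    [AddCommGroup T] [Module K T]
    [Group G] [DistribMulAction G T] [SMulCommClass G K T]
    -- `T` is a `G`-Hom Lie triple system
    (brT : T →ₗ[K] T →ₗ[K] T →ₗ[K] T) (α : T →ₗ[K] T)
    (hT1 : ∀ a c, brT a a c = 0)
    (hT2 : ∀ a b c, brT a b c + brT b c a + brT c a b = 0)
    (hT3 : ∀ a b c d e, brT (α a) (α b) (brT c d e) =
      brT (brT a b c) (α d) (α e) + brT (α c) (brT a b d) (α e) +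
        brT (α c) (α d) (brT a b e))
    (hTmul : ∀ a b c, α (brT a b c) = brT (α a) (α b) (α c))
    (hTact : ∀ (g : G) (a b c : T), g • brT a b c = brT (g • a) (g • b) (g • c))
    (hTα : ∀ (g : G) (a : T), α (g • a) = g • α a)
    -- `μ` is an equivariant formal one-parameter deformation of `T` of order `n`
    (n : ℕ) (μ : ℕ → T →ₗ[K] T →ₗ[K] T →ₗ[K] T)
    (hμ0 : μ 0 = brT)
    (hequiv : ∀ i ≤ n, ∀ (g : G) (a b c : T),
      μ i (g • a) (g • b) (g • c) = g • μ i a b c)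
    (hd0 : ∀ r ≤ n, ∀ a b c, μ r (α a) (α b) (α c) = α (μ r a b c))
    (hd1 : ∀ r ≤ n, ∀ a b, μ r a a b = 0)
    (hd2 : ∀ r ≤ n, ∀ a b c, μ r a b c + μ r b c a + μ r c a b = 0)
    (hd3 : ∀ r ≤ n, ∀ a b c d e,
      ∑ i ∈ Finset.range (r + 1), μ i (α a) (α b) (μ (r - i) c d e) =
        ∑ i ∈ Finset.range (r + 1),
          (μ i (μ (r - i) a b c) (α d) (α e) + μ i (α c) (μ (r - i) a b d) (α e) +
            μ i (α c) (α d) (μ (r - i) a b e)))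
    -- the obstruction 5-cochain `F_{n+1}`
    (F : T → T → T → T → T → T)
    (hF : ∀ a b c d e, F a b c d e =
      ∑ i ∈ Finset.Icc 1 n,
        (μ i (α a) (α b) (μ (n + 1 - i) c d e) -
          μ i (μ (n + 1 - i) a b c) (α d) (α e) -
          μ i (α c) (μ (n + 1 - i) a b d) (α e) -
          μ i (α c) (α d) (μ (n + 1 - i) a b e))) :
    -- `δ⁵ F_{n+1} = 0`
    ∀ x₁ x₂ x₃ x₄ x₅ x₆ x₇ : T,
      brT (F x₁ x₂ x₃ x₄ x₅) (α (α x₆)) (α (α x₇)) -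
            brT (F x₁ x₂ x₃ x₄ x₆) (α (α x₅)) (α (α x₇)) +
          brT (α (α x₁)) (α (α x₂)) (F x₃ x₄ x₅ x₆ x₇) -
          brT (α (α x₃)) (α (α x₄)) (F x₁ x₂ x₅ x₆ x₇) +
          brT (α (α x₅)) (α (α x₆)) (F x₁ x₂ x₃ x₄ x₇) -
          F (brT x₁ x₂ x₃) (α x₄) (α x₅) (α x₆) (α x₇) -
          F (α x₃) (brT x₁ x₂ x₄) (α x₅) (α x₆) (α x₇) -
          F (α x₃) (α x₄) (brT x₁ x₂ x₅) (α x₆) (α x₇) -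
          F (α x₃) (α x₄) (α x₅) (brT x₁ x₂ x₆) (α x₇) -
          F (α x₃) (α x₄) (α x₅) (α x₆) (brT x₁ x₂ x₇) +
          F (α x₁) (α x₂) (brT x₃ x₄ x₅) (α x₆) (α x₇) +
          F (α x₁) (α x₂) (α x₅) (brT x₃ x₄ x₆) (α x₇) +
          F (α x₁) (α x₂) (α x₅) (α x₆) (brT x₃ x₄ x₇) -
        F (α x₁) (α x₂) (α x₃) (α x₄) (brT x₅ x₆ x₇) = 0 := by
  intro x₁ x₂ x₃ x₄ x₅ x₆ x₇
  set m' : ℕ → T →ₗ[K] T →ₗ[K] T →ₗ[K] T :=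
    fun i => if i ≤ n then μ i else 0 with hm'
  have hm'le : ∀ i, i ≤ n → m' i = μ i := fun i hi => by simp [hm', hi]
  have hm'gt : m' (n + 1) = 0 := by simp [hm']
  have hm'0 : m' 0 = brT := by rw [hm'le 0 (Nat.zero_le n), hμ0]
  have hsw : ∀ i (a b c : T), m' i b a c = - m' i a b c := by
    intro i a b c
    by_cases hi : i ≤ n
    · have h0 := hd1 i hi (a + b) c
      have h1 := hd1 i hi a c
      have h2 := hd1 i hi b c
      simp only [map_add, LinearMap.add_apply, h1, h2, zero_add, add_zero] at h0
      rw [hm'le i hi]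
      exact eq_neg_of_add_eq_zero_left h0
    · simp [hm', hi]
  have hal : ∀ i (a b c : T), m' i (α a) (α b) (α c) = α (m' i a b c) := by
    intro i a b c
    by_cases hi : i ≤ n
    · rw [hm'le i hi]; exact hd0 i hi a b c
    · simp [hm', hi]
  -- J vanishes in degrees ≤ n
  have hJ0 : ∀ r ≤ n, ∀ a b c d e : T, stmt11_J m' α r a b c d e = 0 := by
    intro r hr a b c d e
    have hrw : stmt11_J m' α r a b c d e =
        ∑ q ∈ antidiagonal r,
          (μ q.1 (α a) (α b) (μ q.2 c d e) - μ q.1 (μ q.2 a b c) (α d) (α e) -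
           μ q.1 (α c) (μ q.2 a b d) (α e) - μ q.1 (α c) (α d) (μ q.2 a b e)) := by
      unfold stmt11_J
      refine Finset.sum_congr rfl fun q hq => ?_
      have hmem := Finset.HasAntidiagonal.mem_antidiagonal.1 hq
      rw [hm'le q.1 (by omega), hm'le q.2 (by omega)]
    rw [hrw]
    rw [Nat.sum_antidiagonal_eq_sum_range_succ_mk]
    simp only [Finset.sum_sub_distrib]
    rw [hd3 r hr a b c d e, Finset.sum_add_distrib, Finset.sum_add_distrib]
    abel
  -- J at degree n+1 equals F
  have hJtop : ∀ a b c d e : T, stmt11_J m' α (n + 1) a b c d e = F a b c d e := by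
    intro a b c d e
    rw [hF]
    unfold stmt11_J
    rw [Nat.sum_antidiagonal_eq_sum_range_succ_mk]
    rw [Finset.sum_range_succ]
    have hlast :
        (m' (n+1) (α a) (α b) (m' (n+1-(n+1)) c d e) -
         m' (n+1) (m' (n+1-(n+1)) a b c) (α d) (α e) -
         m' (n+1) (α c) (m' (n+1-(n+1)) a b d) (α e) -
         m' (n+1) (α c) (α d) (m' (n+1-(n+1)) a b e)) = 0 := by
      rw [hm'gt]; simp
    rw [hlast, add_zero, Finset.sum_range_succ']
    have hfirst :
        (m' 0 (α a) (α b) (m' (n+1-0) c d e) -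
         m' 0 (m' (n+1-0) a b c) (α d) (α e) -
         m' 0 (α c) (m' (n+1-0) a b d) (α e) -
         m' 0 (α c) (α d) (m' (n+1-0) a b e)) = 0 := by
      have : n + 1 - 0 = n + 1 := by omega
      rw [this, hm'gt]; simp
    rw [hfirst, add_zero]
    rw [← Finset.Ico_add_one_right_eq_Icc, Finset.sum_Ico_eq_sum_range]
    refine Finset.sum_congr rfl fun i hi => ?_
    simp only [Finset.mem_range] at hi
    have e1 : 1 + i = i + 1 := by omega
    rw [e1, hm'le (i+1) (by omega), hm'le (n+1-(i+1)) (by omega)]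
  -- universal identity for the convolution product
  have key := stmt11_UL (stmt11_conv m') (stmt11_ph α)
    (stmt11_conv_sub1 m') (stmt11_conv_sub3 m')
    (stmt11_conv_swap m' hsw) (stmt11_conv_mult m' α hal)
    (stmt11_FW m' α) (fun a b c d e => rfl)
    (stmt11_ee x₁) (stmt11_ee x₂) (stmt11_ee x₃) (stmt11_ee x₄)
    (stmt11_ee x₅) (stmt11_ee x₆) (stmt11_ee x₇)
  have keyk := congrFun key (n + 1)
  simp only [Pi.sub_apply, Pi.add_apply, Pi.zero_apply, stmt11_phee, stmt11_FJ,
    stmt11_E1] at keyk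
  -- extraction lemmas for the outer-bracket terms
  have ext1 : ∀ y₁ y₂ y₃ y₄ y₅ b c : T,
      (∑ p ∈ antidiagonal (n+1), m' p.1 (stmt11_J m' α p.2 y₁ y₂ y₃ y₄ y₅) b c) =
        brT (F y₁ y₂ y₃ y₄ y₅) b c := by
    intro y₁ y₂ y₃ y₄ y₅ b c
    rw [stmt11_sum_ad_left (n+1) _ (fun p hp hp1 => by
      have hmem := Finset.HasAntidiagonal.mem_antidiagonal.1 hp
      rw [hJ0 p.2 (by omega)]
      simp)]
    simp only [hm'0, hJtop]
  have ext3 : ∀ y₁ y₂ y₃ y₄ y₅ b c : T,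
      (∑ p ∈ antidiagonal (n+1), m' p.1 b c (stmt11_J m' α p.2 y₁ y₂ y₃ y₄ y₅)) =
        brT b c (F y₁ y₂ y₃ y₄ y₅) := by
    intro y₁ y₂ y₃ y₄ y₅ b c
    rw [stmt11_sum_ad_left (n+1) _ (fun p hp hp1 => by
      have hmem := Finset.HasAntidiagonal.mem_antidiagonal.1 hp
      rw [hJ0 p.2 (by omega)]
      simp)]
    simp only [hm'0, hJtop]
  -- rewrite terms 1-5
  rw [stmt11_Cw1 m' (α (α x₆)) (α (α x₇)) (fun r => stmt11_J m' α r x₁ x₂ x₃ x₄ x₅) (n+1),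
      stmt11_Cw1 m' (α (α x₅)) (α (α x₇)) (fun r => stmt11_J m' α r x₁ x₂ x₃ x₄ x₆) (n+1),
      stmt11_Cw3 m' (α (α x₁)) (α (α x₂)) (fun r => stmt11_J m' α r x₃ x₄ x₅ x₆ x₇) (n+1),
      stmt11_Cw3 m' (α (α x₃)) (α (α x₄)) (fun r => stmt11_J m' α r x₁ x₂ x₅ x₆ x₇) (n+1),
      stmt11_Cw3 m' (α (α x₅)) (α (α x₆)) (fun r => stmt11_J m' α r x₁ x₂ x₃ x₄ x₇) (n+1)]
    at keyk
  simp only [ext1, ext3] at keyk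
  -- rewrite terms 6-14 via the slot lemmas
  rw [stmt11_slot1 m' α (fun k => m' k x₁ x₂ x₃) (α x₄) (α x₅) (α x₆) (α x₇) (n+1),
      stmt11_slot2 m' α (fun k => m' k x₁ x₂ x₄) (α x₃) (α x₅) (α x₆) (α x₇) (n+1),
      stmt11_slot3 m' α (fun k => m' k x₁ x₂ x₅) (α x₃) (α x₄) (α x₆) (α x₇) (n+1),
      stmt11_slot4 m' α (fun k => m' k x₁ x₂ x₆) (α x₃) (α x₄) (α x₅) (α x₇) (n+1),
      stmt11_slot5 m' α (fun k => m' k x₁ x₂ x₇) (α x₃) (α x₄) (α x₅) (α x₆) (n+1),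
      stmt11_slot3 m' α (fun k => m' k x₃ x₄ x₅) (α x₁) (α x₂) (α x₆) (α x₇) (n+1),
      stmt11_slot4 m' α (fun k => m' k x₃ x₄ x₆) (α x₁) (α x₂) (α x₅) (α x₇) (n+1),
      stmt11_slot5 m' α (fun k => m' k x₃ x₄ x₇) (α x₁) (α x₂) (α x₅) (α x₆) (n+1),
      stmt11_slot5 m' α (fun k => m' k x₅ x₆ x₇) (α x₁) (α x₂) (α x₃) (α x₄) (n+1)]
    at keyk
  have hkill : ∀ p : ℕ × ℕ, p ∈ antidiagonal (n+1) → p.1 ≠ 0 →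
      ∀ a b c d e : T, stmt11_J m' α p.2 a b c d e = 0 := by
    intro p hp hp1 a b c d e
    have hmem := Finset.HasAntidiagonal.mem_antidiagonal.1 hp
    exact hJ0 p.2 (by omega) _ _ _ _ _
  have exS1 : ∀ (z₁ z₂ z₃ y2 y3 y4 y5 : T),
      (∑ p ∈ antidiagonal (n+1), stmt11_J m' α p.2 (m' p.1 z₁ z₂ z₃) y2 y3 y4 y5) =
        F (brT z₁ z₂ z₃) y2 y3 y4 y5 := by
    intro z₁ z₂ z₃ y2 y3 y4 y5
    rw [stmt11_sum_ad_left (n+1) _ (fun p hp hp1 => hkill p hp hp1 _ _ _ _ _)]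
    simp only [hm'0, hJtop]
  have exS2 : ∀ (z₁ z₂ z₃ y1 y3 y4 y5 : T),
      (∑ p ∈ antidiagonal (n+1), stmt11_J m' α p.2 y1 (m' p.1 z₁ z₂ z₃) y3 y4 y5) =
        F y1 (brT z₁ z₂ z₃) y3 y4 y5 := by
    intro z₁ z₂ z₃ y1 y3 y4 y5
    rw [stmt11_sum_ad_left (n+1) _ (fun p hp hp1 => hkill p hp hp1 _ _ _ _ _)]
    simp only [hm'0, hJtop]
  have exS3 : ∀ (z₁ z₂ z₃ y1 y2 y4 y5 : T),
      (∑ p ∈ antidiagonal (n+1), stmt11_J m' α p.2 y1 y2 (m' p.1 z₁ z₂ z₃) y4 y5) =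
        F y1 y2 (brT z₁ z₂ z₃) y4 y5 := by
    intro z₁ z₂ z₃ y1 y2 y4 y5
    rw [stmt11_sum_ad_left (n+1) _ (fun p hp hp1 => hkill p hp hp1 _ _ _ _ _)]
    simp only [hm'0, hJtop]
  have exS4 : ∀ (z₁ z₂ z₃ y1 y2 y3 y5 : T),
      (∑ p ∈ antidiagonal (n+1), stmt11_J m' α p.2 y1 y2 y3 (m' p.1 z₁ z₂ z₃) y5) =
        F y1 y2 y3 (brT z₁ z₂ z₃) y5 := by
    intro z₁ z₂ z₃ y1 y2 y3 y5
    rw [stmt11_sum_ad_left (n+1) _ (fun p hp hp1 => hkill p hp hp1 _ _ _ _ _)]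
    simp only [hm'0, hJtop]
  have exS5 : ∀ (z₁ z₂ z₃ y1 y2 y3 y4 : T),
      (∑ p ∈ antidiagonal (n+1), stmt11_J m' α p.2 y1 y2 y3 y4 (m' p.1 z₁ z₂ z₃)) =
        F y1 y2 y3 y4 (brT z₁ z₂ z₃) := by
    intro z₁ z₂ z₃ y1 y2 y3 y4
    rw [stmt11_sum_ad_left (n+1) _ (fun p hp hp1 => hkill p hp hp1 _ _ _ _ _)]
    simp only [hm'0, hJtop]
  simp only [exS1, exS2, exS3, exS4, exS5] at keyk
  exact keyk
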